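/- For n ≥ 2 and any prime p, the order of L_n modulo p equals p; i.e., L_n^p ≡ I_n (mod p), and no smaller positive power of L_n is congruent to the identity matrix modulo p. -/

import Mathlib

/-- `L n` over `ZMod p`: the `n × n` matrix whose 1-based `(i,j)` entry is `C(i-1, j-1)`. -/
def LmatMod (p n : ℕ) : Matrix (Fin n) (Fin n) (ZMod p) :=
  Matrix.of fun i j => (Nat.choose i.1 j.1 : ZMod p)

lemma key_sum (n i j m : ℕ) (hi : i < n) :
    ∑ k ∈ Finset.range n, i.choose k * (k.choose j * m ^ (k - j)) =
      i.choose j * (m + 1) ^ (i - j) := by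
  rcases le_or_gt j i with hj | hj
  · have hsub : Finset.Ico j (i + 1) ⊆ Finset.range n := by
      intro k hk
      simp only [Finset.mem_Ico] at hk
      exact Finset.mem_range.mpr (lt_of_lt_of_le hk.2 hi)
    rw [← Finset.sum_subset hsub]
    · rw [Finset.sum_Ico_eq_sum_range]
      have hlen : i + 1 - j = (i - j) + 1 := by omega
      rw [hlen]
      have hterm : ∀ t ∈ Finset.range ((i - j) + 1),
          i.choose (j + t) * ((j + t).choose j * m ^ (j + t - j)) =
            i.choose j * ((i - j).choose t * m ^ t) := by
        intro t ht
        have ht' : t ≤ i - j := by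
          have := Finset.mem_range.mp ht; omega
        have h1 : j + t ≤ i := by omega
        have h2 : j ≤ j + t := Nat.le_add_right _ _
        have hcm := Nat.choose_mul (n := i) h2
        have hjt : j + t - j = t := by omega
        rw [hjt, ← mul_assoc, hcm, Nat.add_sub_cancel_left, mul_assoc]
      rw [Finset.sum_congr rfl hterm, ← Finset.mul_sum]
      congr 1
      have := add_pow m 1 (i - j)
      simp only [one_pow, mul_one] at this
      rw [this]
      exact Finset.sum_congr rfl fun x _ => mul_comm _ _
    · intro k hk hk'
      simp only [Finset.mem_Ico, not_and_or, not_le, not_lt] at hk'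
      rcases hk' with h | h
      · rw [Nat.choose_eq_zero_of_lt h]; ring
      · rw [Nat.choose_eq_zero_of_lt (by omega : i < k)]; ring
  · rw [Nat.choose_eq_zero_of_lt hj, Finset.sum_eq_zero, zero_mul]
    intro k _
    rcases le_or_gt k i with h | h
    · rw [Nat.choose_eq_zero_of_lt (by omega : k < j)]; ring
    · rw [Nat.choose_eq_zero_of_lt h]; ring

lemma Lmat_pow_apply (p n m : ℕ) (i j : Fin n) :
    (LmatMod p n ^ m) i j = ((i.1.choose j.1 * m ^ (i.1 - j.1) : ℕ) : ZMod p) := by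
  induction m generalizing i j with
  | zero =>
    simp only [pow_zero, Nat.pow_zero, mul_one]
    rcases eq_or_ne i j with h | h
    · subst h
      simp [Matrix.one_apply_eq, Nat.choose_self]
    · rw [Matrix.one_apply_ne h]
      rcases lt_or_gt_of_ne (fun hh : i.1 = j.1 => h (Fin.ext hh)) with hlt | hlt
      · rw [Nat.choose_eq_zero_of_lt hlt]; simp
      · rw [zero_pow (by omega : i.1 - j.1 ≠ 0)]; simp
  | succ m ih =>
    rw [pow_succ', Matrix.mul_apply]
    simp only [ih]
    simp only [LmatMod, Matrix.of_apply]
    have hterm : ∀ k : Fin n,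
        ((i.1.choose k.1 : ZMod p)) * ((k.1.choose j.1 * m ^ (k.1 - j.1) : ℕ) : ZMod p) =
          ((i.1.choose k.1 * (k.1.choose j.1 * m ^ (k.1 - j.1)) : ℕ) : ZMod p) := by
      intro k; push_cast; ring
    rw [Finset.sum_congr rfl (fun k _ => hterm k), ← Nat.cast_sum,
      Fin.sum_univ_eq_sum_range (fun k => i.1.choose k * (k.choose j.1 * m ^ (k - j.1))),
      key_sum n i.1 j.1 m i.isLt]

theorem order_Lmat_mod (p n : ℕ) (hp : p.Prime) (hn : 2 ≤ n) :
    LmatMod p n ^ p = 1 ∧ ∀ m : ℕ, 0 < m → m < p → LmatMod p n ^ m ≠ 1 := by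
  haveI : NeZero p := ⟨hp.pos.ne'⟩
  constructor
  · ext i j
    rw [Lmat_pow_apply]
    rcases eq_or_ne i j with h | h
    · subst h
      simp [Matrix.one_apply_eq, Nat.choose_self]
    · rw [Matrix.one_apply_ne h]
      rcases lt_or_gt_of_ne (fun hh : i.1 = j.1 => h (Fin.ext hh)) with hlt | hlt
      · rw [Nat.choose_eq_zero_of_lt hlt]; simp
      · push_cast
        rw [ZMod.natCast_self, zero_pow (by omega : i.1 - j.1 ≠ 0), mul_zero]
  · intro m hm hmp heq
    have h1 : (1 : ℕ) < n := by omega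
    have h0 : (0 : ℕ) < n := by omega
    have := congrFun (congrFun heq ⟨1, h1⟩) ⟨0, h0⟩
    rw [Lmat_pow_apply, Matrix.one_apply_ne (by simp : (⟨1, h1⟩ : Fin n) ≠ ⟨0, h0⟩)] at this
    simp only [Nat.choose_zero_right, one_mul, Nat.sub_zero, pow_one] at this
    have hdvd : p ∣ m := (ZMod.natCast_eq_zero_iff m p).mp this
    exact absurd (Nat.le_of_dvd hm hdvd) (by omega)
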